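/- (Admissible sequences converge after renormalization.) Let (β_m)_{m≥1} be real numbers with 4^m·β_m → 0 as m → ∞, and set c_m = cos 2β_m. Let m₀, n ∈ ℕ, let z_{m₀} ∈ [0,2], let (p_m) be a sequence with values in {+,−} such that p_m = − for all m > n, and define recursively z_m = S^{p_m}_{c_m}(z_{m−1}) for m > m₀. Then every z_m lies in [0,2] and the sequence (4^m·z_m) converges in ℝ. -/

import Mathlib

/-- The inverse branch `S⁺_c(w) = 1 + (1/√2)·√(1 + (1−w)c)` of the spectral decimation map. -/
noncomputable def Splus (c w : ℝ) : ℝ := 1 + (Real.sqrt 2)⁻¹ * Real.sqrt (1 + (1 - w) * c)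

/-- The inverse branch `S⁻_c(w) = 1 − (1/√2)·√(1 + (1−w)c)` of the spectral decimation map. -/
noncomputable def Sminus (c w : ℝ) : ℝ := 1 - (Real.sqrt 2)⁻¹ * Real.sqrt (1 + (1 - w) * c)

lemma step_facts (c w : ℝ) (hc : -1 ≤ c) (hc1 : c ≤ 1) (hw : 0 ≤ w) (hw2 : w ≤ 2) :
    (0 ≤ Splus c w ∧ Splus c w ≤ 2) ∧ (0 ≤ Sminus c w ∧ Sminus c w ≤ 2) ∧
    Sminus c w ≤ (1 - (1 - w) * c) / 2 ∧
    2 * Sminus c w ≤ ((1 - (1 - w) * c) / 2) * (1 + (1 - (1 - w) * c) / 2) ∧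
    |4 * Sminus c w - w| ≤ w * ((1 - (1 - w) * c) / 2) + 2 * (1 - c) := by
  set a : ℝ := 1 + (1 - w) * c with ha
  have ha0 : 0 ≤ a := by nlinarith
  have ha2 : a ≤ 2 := by nlinarith
  set s : ℝ := (Real.sqrt 2)⁻¹ * Real.sqrt a with hs
  have hs0 : 0 ≤ s := mul_nonneg (by positivity) (Real.sqrt_nonneg _)
  have hs2 : s ^ 2 = a / 2 := by
    rw [hs, mul_pow, Real.sq_sqrt ha0, inv_pow, Real.sq_sqrt (by norm_num : (0:ℝ) ≤ 2)]
    ring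
  have hs1 : s ≤ 1 := by nlinarith
  set x : ℝ := (1 - (1 - w) * c) / 2 with hx
  have hxs : s ^ 2 = 1 - x := by rw [hs2, hx, ha]; ring
  have hx0 : 0 ≤ x := by nlinarith
  have hx1 : x ≤ 1 := by nlinarith
  have hslx : 1 - x ≤ s := by nlinarith [mul_nonneg hs0 (sub_nonneg.2 hs1)]
  have hzm : Sminus c w = 1 - s := rfl
  have hzp : Splus c w = 1 + s := rfl
  refine ⟨⟨by nlinarith, by nlinarith⟩, ⟨by nlinarith, by nlinarith⟩, by nlinarith, ?_, ?_⟩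
  · rw [hzm]; nlinarith [mul_nonneg (mul_nonneg hs0 (sub_nonneg.2 hs1)) (sub_nonneg.2 hs1)]
  · rw [hzm, abs_le]
    have h2x : 2 * x = w + (1 - w) * (1 - c) := by rw [hx]; ring
    constructor
    · nlinarith [mul_nonneg hw (sub_nonneg.2 hs1), mul_nonneg hs0 (sub_nonneg.2 hs1)]
    · nlinarith [mul_nonneg hw (sub_nonneg.2 hs1), mul_nonneg hs0 (sub_nonneg.2 hs1),
        mul_nonneg (mul_nonneg hw (sub_nonneg.2 hs1)) hs0]


set_option maxHeartbeats 2000000 in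
/-- Admissible sequences converge after renormalization: if `4^m·β_m → 0`,
`z_{m₀} ∈ [0,2]`, and `z_m = S^{p_m}_{cos 2β_m}(z_{m−1})` for `m > m₀` with branch choices
`p_m ∈ {+,−}` satisfying `p_m = −` for all `m > n`, then every `z_m` lies in `[0,2]` and
`4^m·z_m` converges. -/
theorem stmt15 (β : ℕ → ℝ)
    (hβ : Filter.Tendsto (fun m => (4 : ℝ) ^ m * β m) Filter.atTop (nhds 0))
    (m₀ n : ℕ) (z : ℕ → ℝ) (hz0 : z m₀ ∈ Set.Icc (0 : ℝ) 2)
    (p : ℕ → Bool) (hp : ∀ m, n < m → p m = false)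
    (hrec : ∀ m, m₀ < m →
        z m = if p m then Splus (Real.cos (2 * β m)) (z (m - 1))
              else Sminus (Real.cos (2 * β m)) (z (m - 1))) :
    (∀ m, m₀ ≤ m → z m ∈ Set.Icc (0 : ℝ) 2) ∧
    ∃ L : ℝ, Filter.Tendsto (fun m => (4 : ℝ) ^ m * z m) Filter.atTop (nhds L) := by
  have hc : ∀ m, -1 ≤ Real.cos (2 * β m) ∧ Real.cos (2 * β m) ≤ 1 :=
    fun m => ⟨Real.neg_one_le_cos _, Real.cos_le_one _⟩
  -- Part 1 : z stays in [0,2]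
  have H1 : ∀ m, m₀ ≤ m → 0 ≤ z m ∧ z m ≤ 2 := by
    intro m
    induction m with
    | zero =>
      intro h
      have h0 : m₀ = 0 := Nat.le_zero.mp h
      subst h0
      exact ⟨hz0.1, hz0.2⟩
    | succ m ih =>
      intro h
      rcases eq_or_lt_of_le h with he | hlt
      · subst he
        exact ⟨hz0.1, hz0.2⟩
      · obtain ⟨h0, h2⟩ := ih (Nat.lt_succ_iff.mp hlt)
        have hr := hrec (m+1) hlt
        simp only [Nat.add_sub_cancel] at hr
        obtain ⟨hsp, hsm, -, -, -⟩ := step_facts _ _ (hc (m+1)).1 (hc (m+1)).2 h0 h2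
        by_cases hb : p (m+1) = true
        · simp only [hb, if_true] at hr; rw [hr]; exact hsp
        · simp only [hb, if_false, Bool.not_eq_true] at hr
          rw [if_neg (by simp_all)] at hr
          rw [hr]; exact hsm
  refine ⟨fun m hm => ⟨(H1 m hm).1, (H1 m hm).2⟩, ?_⟩
  -- choose M
  obtain ⟨N, hN⟩ := Metric.tendsto_atTop.mp hβ 1 one_pos
  set M : ℕ := N + m₀ + n with hM
  have hε : ∀ m, M ≤ m → 1 - Real.cos (2 * β m) ≤ 2 / 16 ^ m := by
    intro m hm
    have h1 : |(4:ℝ) ^ m * β m| < 1 := by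
      have := hN m (by omega)
      rwa [Real.dist_eq, sub_zero] at this
    have h16 : ((4:ℝ) ^ m) ^ 2 = 16 ^ m := by
      rw [← pow_mul, mul_comm, pow_mul]; norm_num
    have h2 : (16:ℝ) ^ m * (β m) ^ 2 ≤ 1 := by
      have habs : ((4:ℝ) ^ m * β m) ^ 2 ≤ 1 := by
        rw [← sq_abs]; nlinarith [abs_nonneg ((4:ℝ) ^ m * β m)]
      rw [mul_pow, h16] at habs
      linarith
    have h3 : 1 - Real.cos (2 * β m) = 2 * Real.sin (β m) ^ 2 := by
      have := Real.sin_sq (β m)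
      rw [Real.cos_two_mul]; linarith
    have h4 : Real.sin (β m) ^ 2 ≤ (β m) ^ 2 := Real.sin_sq_le_sq
    have h5 : (0:ℝ) < 16 ^ m := by positivity
    rw [h3, le_div_iff₀ h5]
    nlinarith
  have hrec' : ∀ m, M < m → z m = Sminus (Real.cos (2 * β m)) (z (m-1)) := by
    intro m hm
    rw [hrec m (by omega), hp m (by omega), if_neg (by simp)]
  -- combined one-step estimates
  have key : ∀ m, M < m →
      z m ≤ z (m-1) / 2 + 1 / 16 ^ m ∧
      2 * z m ≤ (z (m-1) / 2 + 1 / 16 ^ m) * (1 + (z (m-1) / 2 + 1 / 16 ^ m)) ∧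
      |4 * z m - z (m-1)| ≤ z (m-1) * (z (m-1) / 2 + 1 / 16 ^ m) + 4 * (1 / 16 ^ m) := by
    intro m hm
    have hw := H1 (m-1) (by omega)
    obtain ⟨hc1, hc2⟩ := hc m
    obtain ⟨-, -, h3, h4, h5⟩ := step_facts _ _ hc1 hc2 hw.1 hw.2
    rw [← hrec' m hm] at h3 h4 h5
    have hε' := hε m (by omega)
    rw [show (2:ℝ)/16^m = 2*(1/16^m) by ring] at hε'
    have h16 : (0:ℝ) < 16 ^ m := by positivity
    have hη : (0:ℝ) < 1 / 16 ^ m := by positivity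
    have hxX : (1 - (1 - z (m-1)) * Real.cos (2 * β m)) / 2 ≤ z (m-1) / 2 + 1 / 16 ^ m := by
      nlinarith [mul_nonneg hw.1 (sub_nonneg.2 hc2)]
    have hx0 : 0 ≤ (1 - (1 - z (m-1)) * Real.cos (2 * β m)) / 2 := by
      nlinarith [mul_self_nonneg (1 - z (m-1) - Real.cos (2 * β m)),
        mul_self_nonneg (1 - z (m-1) + Real.cos (2 * β m))]
    have hX0 : (0:ℝ) ≤ z (m-1) / 2 + 1 / 16 ^ m := by
      have := hw.1; positivity
    refine ⟨by nlinarith, by nlinarith, ?_⟩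
    refine le_trans h5 ?_
    have hwx : z (m-1) * ((1 - (1 - z (m-1)) * Real.cos (2 * β m)) / 2)
        ≤ z (m-1) * (z (m-1) / 2 + 1 / 16 ^ m) := mul_le_mul_of_nonneg_left hxX hw.1
    linarith
  -- Phase 1 : geometric decay with rate 1/2
  have P1 : ∀ k, z (M + k) + 1 / 16 ^ (M + k) ≤ 3 / 2 ^ k := by
    intro k
    induction k with
    | zero =>
      have h1 : (1:ℝ) ≤ 16 ^ M := one_le_pow₀ (by norm_num)
      have h2 := H1 M (by omega)
      have h3 : (1:ℝ) / 16 ^ M ≤ 1 := by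
        rw [div_le_one (by positivity)]; exact h1
      simp only [Nat.add_zero, pow_zero]
      rw [div_one]
      linarith
    | succ k ih =>
      have hk := (key (M + k + 1) (by omega)).1
      rw [show M + k + 1 - 1 = M + k by omega] at hk
      have hq : (1:ℝ) / 16 ^ (M + k + 1) = (1 / 16 ^ (M + k)) / 16 := by
        rw [pow_succ]; ring
      have hr : (3:ℝ) / 2 ^ (k+1) = (3 / 2 ^ k) / 2 := by
        rw [pow_succ]; ring
      have hq0 : (0:ℝ) ≤ 1 / 16 ^ (M + k) := by positivity
      show z (M + (k+1)) + 1 / 16 ^ (M + (k+1)) ≤ 3 / 2 ^ (k+1)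
      rw [show M + (k+1) = M + k + 1 by omega, hq, hr]
      rw [hq] at hk
      linarith
  have P1' : ∀ k, z (M + 5 + k) ≤ 1 / (8 * 2 ^ k) := by
    intro k
    have h := P1 (5 + k)
    rw [show M + (5 + k) = M + 5 + k by omega] at h
    have h2 : (2:ℝ) ^ (5 + k) = 32 * 2 ^ k := by rw [pow_add]; norm_num
    have hq0 : (0:ℝ) ≤ 1 / 16 ^ (M + 5 + k) := by positivity
    have h3 : (3:ℝ) / (32 * 2 ^ k) ≤ 1 / (8 * 2 ^ k) := by
      rw [div_le_div_iff₀ (by positivity) (by positivity)]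
      nlinarith [pow_pos (show (0:ℝ) < 2 by norm_num) k]
    rw [h2] at h
    linarith
  -- common per-index facts, phrased with opaque atoms
  have common : ∀ k : ℕ, ∃ B u w z' η : ℝ,
      B = 4 ^ (M + 5 + k) ∧ u = 1 / 2 ^ k ∧ w = z (M + 5 + k) ∧ z' = z (M + 5 + k + 1) ∧
      0 < u ∧ u ≤ 1 ∧ 1 ≤ B ∧ 0 ≤ w ∧ 0 ≤ z' ∧ 0 < η ∧
      B * η ≤ u / 16 ∧ η ≤ u / 16 ∧ w ≤ u / 8 ∧
      2 * z' ≤ (w / 2 + η) * (1 + (w / 2 + η)) ∧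
      |4 * z' - w| ≤ w * (w / 2 + η) + 4 * η := by
    intro k
    refine ⟨4 ^ (M + 5 + k), 1 / 2 ^ k, z (M + 5 + k), z (M + 5 + k + 1),
      1 / 16 ^ (M + 5 + k + 1), rfl, rfl, rfl, rfl, by positivity, ?_, ?_, ?_, ?_, by positivity,
      ?_, ?_, ?_, ?_, ?_⟩
    · rw [div_le_one (by positivity)]; exact one_le_pow₀ (by norm_num)
    · exact one_le_pow₀ (by norm_num)
    · exact (H1 (M + 5 + k) (by omega)).1
    · exact (H1 (M + 5 + k + 1) (by omega)).1
    · -- B * η ≤ u / 16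
      have h2kB : (2:ℝ) ^ k ≤ 4 ^ (M + 5 + k) :=
        le_trans (pow_le_pow_left₀ (by norm_num) (by norm_num) k)
          (pow_le_pow_right₀ (by norm_num) (by omega))
      have hBpos : (0:ℝ) < 4 ^ (M + 5 + k) := by positivity
      have h16 : (16:ℝ) ^ (M + 5 + k + 1) =
          4 ^ (M + 5 + k) * 4 ^ (M + 5 + k) * 16 := by
        rw [pow_succ, show (16:ℝ) = 4 * 4 by norm_num, mul_pow]
      have h1 : (4:ℝ) ^ (M + 5 + k) * (1 / 16 ^ (M + 5 + k + 1)) =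
          1 / (16 * 4 ^ (M + 5 + k)) := by
        rw [h16]; field_simp; try ring
      rw [h1]
      have h2 : (1:ℝ) / 2 ^ k / 16 = 1 / (16 * 2 ^ k) := by ring
      rw [h2]
      apply one_div_le_one_div_of_le (by positivity)
      nlinarith
    · -- η ≤ u / 16
      have h2k : (2:ℝ) ^ k ≤ 16 ^ (M + 5 + k) :=
        le_trans (pow_le_pow_left₀ (by norm_num) (by norm_num) k)
          (pow_le_pow_right₀ (by norm_num) (by omega))
      have h16 : (16:ℝ) ^ (M + 5 + k + 1) = 16 ^ (M + 5 + k) * 16 := pow_succ _ _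
      have h2 : (1:ℝ) / 2 ^ k / 16 = 1 / (2 ^ k * 16) := by ring
      rw [h16, h2]
      apply one_div_le_one_div_of_le (by positivity)
      have : (0:ℝ) < 2 ^ k := by positivity
      nlinarith
    · -- w ≤ u / 8
      have h := P1' k
      rw [show (1:ℝ)/(8 * 2^k) = (1/2^k)/8 by ring] at h
      exact h
    · -- quadratic step bound
      have hK := (key (M + 5 + k + 1) (by omega)).2.1
      rw [show M + 5 + k + 1 - 1 = M + 5 + k by omega] at hK
      exact hK
    · -- abs step bound
      have hK := (key (M + 5 + k + 1) (by omega)).2.2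
      rw [show M + 5 + k + 1 - 1 = M + 5 + k by omega] at hK
      exact hK
  -- Phase 2 : boundedness of 4^m z m
  have hA1 : (1:ℝ) ≤ 2 * 4 ^ (M + 5) + 1 := by
    have : (0:ℝ) < 4 ^ (M+5) := by positivity
    nlinarith
  have Q : ∀ k, 4 ^ (M + 5 + k) * z (M + 5 + k) ≤
      (2 * 4 ^ (M + 5) + 1) * (2 - 1 / 2 ^ k) := by
    intro k
    induction k with
    | zero =>
      have h2 := H1 (M + 5) (by omega)
      have h4 : (0:ℝ) < 4 ^ (M + 5) := by positivity
      simp only [Nat.add_zero, pow_zero]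
      nlinarith
    | succ k ih =>
      obtain ⟨B, u, w, z', η, hB, hu, hw, hz', hu0, hu1, hB1, hw0, hz'0, hη0,
        hBη, hηu, hwu, hK, -⟩ := common k
      rw [← hB, ← hu, ← hw] at ih
      have hXu : w / 2 + η ≤ u / 8 := by linarith
      have hX0 : 0 ≤ w / 2 + η := by linarith
      have hB0 : (0:ℝ) ≤ B := by linarith
      have hA0 : (0:ℝ) ≤ 2 * 4 ^ (M + 5) + 1 := by linarith
      have hBX : 2 * (B * (w / 2 + η)) ≤ (2 * 4 ^ (M + 5) + 1) * (2 - u) + u / 8 := by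
        have he : 2 * (B * (w / 2 + η)) = B * w + 2 * (B * η) := by ring
        rw [he]; linarith
      have hBz : 2 * (B * z') ≤ B * (w / 2 + η) + B * (w / 2 + η) * (w / 2 + η) := by
        nlinarith [mul_le_mul_of_nonneg_left hK hB0]
      have hBX0 : 0 ≤ B * (w / 2 + η) := mul_nonneg hB0 hX0
      have h7 : 2 * (B * (w / 2 + η)) * (w / 2 + η) ≤
          ((2 * 4 ^ (M + 5) + 1) * (2 - u) + u / 8) * (u / 8) := by
        apply mul_le_mul hBX hXu hX0
        have h4p : (0:ℝ) < 4 ^ (M + 5) := by positivity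
        have : (0:ℝ) ≤ (2 * 4 ^ (M + 5) + 1) * (2 - u) :=
          mul_nonneg (by linarith) (by linarith)
        linarith
      have hgoal : (4:ℝ) ^ (M + 5 + (k+1)) * z (M + 5 + (k+1)) = 4 * (B * z') := by
        rw [show M + 5 + (k+1) = (M + 5 + k) + 1 by omega, pow_succ, hB, hz']; ring
      have hu2 : (1:ℝ) / 2 ^ (k+1) = u / 2 := by rw [hu, pow_succ]; ring
      rw [hgoal, hu2]
      nlinarith [mul_nonneg (sub_nonneg.2 hA1) hu0.le,
        mul_nonneg (mul_nonneg (sub_nonneg.2 hA1) hu0.le) hu0.le,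
        mul_nonneg hu0.le (sub_nonneg.2 hu1)]
  -- Phase 3 : Cauchy sequence
  have hdist : ∀ k, dist ((4:ℝ) ^ (M + 5 + k) * z (M + 5 + k))
      ((4:ℝ) ^ (M + 5 + (k+1)) * z (M + 5 + (k+1))) ≤
      ((2 * 4 ^ (M + 5) + 1) / 4 + 1 / 4) * (1/2) ^ k := by
    intro k
    obtain ⟨B, u, w, z', η, hB, hu, hw, hz', hu0, hu1, hB1, hw0, hz'0, hη0,
      hBη, hηu, hwu, -, hK⟩ := common k
    have hB0 : (0:ℝ) ≤ B := by linarith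
    have hXu : w / 2 + η ≤ u / 8 := by linarith
    have hX0 : 0 ≤ w / 2 + η := by linarith
    have hBw : B * w ≤ 2 * (2 * 4 ^ (M + 5) + 1) := by
      have h1 := Q k
      rw [← hB, ← hw] at h1
      have h2 : ((2:ℝ) * 4 ^ (M + 5) + 1) * (2 - 1 / 2 ^ k) ≤ 2 * (2 * 4 ^ (M + 5) + 1) := by
        have hp : (0:ℝ) < 1 / 2 ^ k := by positivity
        have hc0 : (0:ℝ) < 2 * 4 ^ (M + 5) + 1 := by positivity
        nlinarith [mul_pos hc0 hp]
      exact le_trans h1 h2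
    have hgoal : (4:ℝ) ^ (M + 5 + (k+1)) * z (M + 5 + (k+1)) = 4 * (B * z') := by
      rw [show M + 5 + (k+1) = (M + 5 + k) + 1 by omega, pow_succ, hB, hz']; ring
    have hup : ((1:ℝ)/2) ^ k = u := by
      rw [hu, div_pow, one_pow]
    rw [Real.dist_eq, hgoal, ← hB, ← hw, hup]
    have hkey : |B * w - 4 * (B * z')| = B * |4 * z' - w| := by
      rw [← abs_of_nonneg hB0, ← abs_mul, abs_of_nonneg hB0, ← abs_neg]
      congr 1
      ring
    rw [hkey]
    have hstep : B * |4 * z' - w| ≤ (B * w) * (w / 2 + η) + 4 * (B * η) := by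
      have h1 := mul_le_mul_of_nonneg_left hK hB0
      nlinarith
    have hwx : (B * w) * (w / 2 + η) ≤ 2 * (2 * 4 ^ (M + 5) + 1) * (u / 8) := by
      apply mul_le_mul hBw hXu hX0
      have : (0:ℝ) < 4 ^ (M + 5) := by positivity
      nlinarith
    nlinarith
  have hcau : CauchySeq (fun k => (4:ℝ) ^ (M + 5 + k) * z (M + 5 + k)) :=
    cauchySeq_of_le_geometric (1/2) ((2 * 4 ^ (M + 5) + 1) / 4 + 1 / 4) (by norm_num) hdist
  obtain ⟨L, hL⟩ := cauchySeq_tendsto_of_complete hcau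
  refine ⟨L, (Filter.tendsto_add_atTop_iff_nat (M+5)).mp ?_⟩
  have heq : (fun k => (4:ℝ) ^ (k + (M+5)) * z (k + (M+5))) =
      (fun k => (4:ℝ) ^ (M + 5 + k) * z (M + 5 + k)) := by
    funext k
    rw [Nat.add_comm k (M+5)]
  exact heq ▸ hL
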